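/- For n ≥ 0 and each j with 1 ≤ j ≤ n+2, the following identity between coefficients holds: \sum_{i=1}^{\lfloor (n+2)/2 \rfloor} \sum_{j=0}^{n+2-2i} (1/(n+1)) binom(n+1,i) binom(n+1-i,j) binom(n+1-i-j,i-1) x_1^i x_2^j = \sum_{k=0}^{\lfloor n/2 \rfloor} C_k binom(n,2k) x_1^{k+1} (1+x_2)^{n-2k}, as polynomials in x_1, x_2. -/

import Mathlib

lemma key_coef (k j m : ℕ) :
    ((2*k+j+m+1).choose (k+1) * (k+j+m).choose j * (k+m).choose k : ℚ) * (k+1)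
      = (2*k+j+m+1) * ((2*k).choose k * (2*k+j+m).choose (2*k) * (j+m).choose j) := by
  rw [Nat.cast_choose ℚ (by omega : k+1 ≤ 2*k+j+m+1),
      Nat.cast_choose ℚ (by omega : j ≤ k+j+m),
      Nat.cast_choose ℚ (by omega : k ≤ k+m),
      Nat.cast_choose ℚ (by omega : k ≤ 2*k),
      Nat.cast_choose ℚ (by omega : 2*k ≤ 2*k+j+m),
      Nat.cast_choose ℚ (by omega : j ≤ j+m)]
  rw [show 2*k+j+m+1 - (k+1) = k+j+m by omega,
      show k+j+m - j = k+m by omega,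
      show k+m - k = m by omega,
      show 2*k - k = k by omega,
      show 2*k+j+m - 2*k = j+m by omega,
      show j+m - j = m by omega]
  rw [show 2*k+j+m+1 = (2*k+j+m)+1 from rfl, Nat.factorial_succ, Nat.factorial_succ k]
  push_cast
  have h := fun a : ℕ => Nat.cast_ne_zero (R := ℚ) |>.mpr (Nat.factorial_ne_zero a)
  field_simp

theorem refined_coker (n : ℕ) (x₁ x₂ : ℚ) :
    ∑ i ∈ Finset.Icc 1 ((n + 2) / 2), ∑ j ∈ Finset.range (n + 2 - 2 * i + 1),
        (((n + 1).choose i * ((n + 1) - i).choose j * ((n + 1) - i - j).choose (i - 1) : ℚ)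
            / (n + 1)) * x₁ ^ i * x₂ ^ j
      = ∑ k ∈ Finset.range (n / 2 + 1),
          (catalan k * n.choose (2 * k) : ℚ) * x₁ ^ (k + 1) * (1 + x₂) ^ (n - 2 * k) := by
  rw [show (n + 2) / 2 = n / 2 + 1 by omega,
      show Finset.Icc 1 (n/2+1) = Finset.Ico 1 (n/2+2) by rw [← Finset.Ico_add_one_right_eq_Icc]; rfl,
      Finset.sum_Ico_eq_sum_range, show n / 2 + 2 - 1 = n / 2 + 1 by omega]
  refine Finset.sum_congr rfl fun k hk => ?_
  have hk' : 2 * k ≤ n := by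
    have := Finset.mem_range.mp hk; omega
  rw [add_comm 1 x₂, add_pow, Finset.mul_sum]
  rw [show n + 2 - 2 * (1 + k) + 1 = n - 2 * k + 1 by omega]
  refine Finset.sum_congr rfl fun j hj => ?_
  have hj' : j ≤ n - 2 * k := by
    have := Finset.mem_range.mp hj; omega
  simp only [one_pow, mul_one]
  -- set m so that n = 2k + j + m
  obtain ⟨m, hm⟩ : ∃ m, n = 2 * k + j + m := ⟨n - 2 * k - j, by omega⟩
  subst hm
  have h1 : 2 * k + j + m + 1 - (1 + k) = k + j + m := by omega
  have h2 : 2 * k + j + m + 1 - (1 + k) - j = k + m := by omega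
  have h3 : 1 + k - 1 = k := by omega
  have h4 : 2 * k + j + m - 2 * k = j + m := by omega
  rw [h4]
  rw [show ((2*k+j+m : ℕ) + 1 : ℚ) = ((2*k+j+m+1 : ℕ) : ℚ) by push_cast; ring] 
  rw [show (1 + k) = k + 1 by omega] at *
  rw [show 2*k+j+m+1 - (k+1) = k+j+m by omega, show k+j+m - j = k+m by omega,
      show k+1-1 = k from rfl]
  have hcat : ((k : ℚ) + 1) * catalan k = (2*k).choose k := by
    have h0 : ((k+1) * catalan k : ℕ) = ((2*k).choose k : ℕ) := by
      rw [succ_mul_catalan_eq_centralBinom, Nat.centralBinom]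
    exact_mod_cast congrArg (Nat.cast : ℕ → ℚ) h0
  have hne : ((2*k+j+m : ℕ) : ℚ) + 1 ≠ 0 := by positivity
  have hkne : ((k : ℚ) + 1) ≠ 0 := by positivity
  have key := key_coef k j m
  push_cast at key hcat ⊢
  have hcoef : (((2*k+j+m+1).choose (k+1) : ℚ) * ((k+j+m).choose j) * ((k+m).choose k))
      = (2*(k:ℚ)+j+m+1) * ((catalan k : ℚ) * ((2*k+j+m).choose (2*k)) * ((j+m).choose j)) := by
    apply mul_right_cancel₀ hkne
    linear_combination key - ((2*(k:ℚ)+j+m+1) * (((2*k+j+m).choose (2*k) : ℚ)) * (((j+m).choose j : ℚ))) * hcat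
  field_simp
  linear_combination x₁^(k+1) * x₂^j * hcoef
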